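/- For every integer g ≥ 3, the tuple (2g−1, 0; (−4, 2g−1), (2, 2g−1), (2, 2g−1)) — rotation constants reduced modulo 2g−1 — is a cyclic data set of degree 2g−1 and genus g−1, and its two cone points (2, 2g−1) are compatible with twist factor 1: indeed 2^{−1} ≡ g (mod 2g−1) and g + g ≡ 1 (mod 2g−1). -/
import Mathlib


/-- A *cyclic data set* of degree `n` and genus `g` (Definition 2.1 of the paper), with
orbifold genus `g₀` and cone-point data `C = [(c₁,n₁), …, (c_k,n_k)]`: `n ≥ 2`, `k ≥ 1`,
each `nᵢ ≥ 2` divides `n` with `gcd(cᵢ, nᵢ) = 1`; omitting any `nᵢ` does not change the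
lcm of the `nⱼ`'s; if `g₀ = 0` then that lcm equals `n`; `Σᵢ (n/nᵢ)·cᵢ ≡ 0 (mod n)`;
and the Riemann–Hurwitz formula `2g − 2 = n(2g₀ − 2) + Σᵢ (n − n/nᵢ)` holds. -/
def IsCyclicDataSet (n g₀ g : ℕ) (C : List (ℤ × ℕ)) : Prop :=
  2 ≤ n ∧ C ≠ [] ∧
  (∀ p ∈ C, 2 ≤ p.2 ∧ p.2 ∣ n ∧ Int.gcd p.1 (p.2 : ℤ) = 1) ∧
  (∀ i < C.length,
    ((C.map Prod.snd).eraseIdx i).foldr Nat.lcm 1 = (C.map Prod.snd).foldr Nat.lcm 1) ∧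
  (g₀ = 0 → (C.map Prod.snd).foldr Nat.lcm 1 = n) ∧
  ((n : ℤ) ∣ (C.map (fun p => ((n : ℤ) / (p.2 : ℤ)) * p.1)).sum) ∧
  (2 * (g : ℤ) - 2 =
    (n : ℤ) * (2 * (g₀ : ℤ) - 2) + (C.map (fun p => (n : ℤ) - (n : ℤ) / (p.2 : ℤ))).sum)

/-- For every integer `g ≥ 3`, the tuple
`(2g−1, 0; (−4, 2g−1), (2, 2g−1), (2, 2g−1))` — rotation constants reduced modulo
`2g−1` — is a cyclic data set of degree `2g−1` and genus `g−1`, and its two cone points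
`(2, 2g−1)` are compatible with twist factor `1`: indeed `2⁻¹ ≡ g (mod 2g−1)` and
`g + g ≡ 1 (mod 2g−1)`. -/
theorem stmt_13 (g : ℕ) (hg : 3 ≤ g) :
    IsCyclicDataSet (2*g - 1) 0 (g - 1)
      [((-4 : ℤ) % (2*(g:ℤ) - 1), 2*g - 1), (2, 2*g - 1), (2, 2*g - 1)] ∧
    2 * (g:ℤ) ≡ 1 [ZMOD 2*(g:ℤ) - 1] ∧
    (g:ℤ) + (g:ℤ) ≡ 1 [ZMOD 2*(g:ℤ) - 1] := by
  have hcast : ((2*g - 1 : ℕ) : ℤ) = 2*(g:ℤ) - 1 := by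
    push_cast [Nat.cast_sub (by omega : 1 ≤ 2*g)]; ring
  set N : ℤ := 2*(g:ℤ) - 1 with hNdef
  have hg3 : (3:ℤ) ≤ (g:ℤ) := by exact_mod_cast hg
  have hN : (0:ℤ) < N := by omega
  have hNne : N ≠ 0 := by omega
  have hdiv : N / N = 1 := Int.ediv_self hNne
  have hodd : (2*g - 1) % 2 = 1 := by omega
  have h2 : Nat.gcd 2 (2*g - 1) = 1 := by
    rw [Nat.gcd_rec, hodd]; simp
  have hgcd4 : Int.gcd ((-4 : ℤ) % N) N = 1 := by
    rw [← Int.isCoprime_iff_gcd_eq_one, Int.emod_def, sub_eq_add_neg, ← mul_neg]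
    have h4 : IsCoprime (-4 : ℤ) N := by
      rw [Int.isCoprime_iff_gcd_eq_one, Int.gcd, ← hcast]
      simp only [Int.natAbs_neg, Int.natAbs_natCast]
      have : Nat.Coprime (2^2) (2*g - 1) := Nat.Coprime.pow_left 2 h2
      simpa using this
    exact h4.add_mul_left_left _
  have hgcd2 : Int.gcd (2 : ℤ) N = 1 := by
    rw [Int.gcd, ← hcast]
    simpa using h2
  refine ⟨⟨by omega, by simp, ?_, ?_, ?_, ?_, ?_⟩, ?_, ?_⟩
  · intro p hp
    simp only [List.mem_cons, List.not_mem_nil, or_false] at hp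
    rcases hp with h | h | h <;> subst h <;> refine ⟨by omega, dvd_refl _, ?_⟩ <;>
      simpa [hcast] using (by assumption : _)
  · intro i hi
    simp only [List.length_cons, List.length_nil] at hi
    interval_cases i <;>
      simp [List.eraseIdx, Nat.lcm_self, Nat.lcm_one_right, Nat.lcm_assoc]
  · intro _
    simp [Nat.lcm_self, Nat.lcm_one_right]
  · simp only [List.map_cons, List.map_nil, List.sum_cons, List.sum_nil, hcast, hdiv, one_mul,
      add_zero]
    refine ⟨-((-4)/N), ?_⟩
    rw [Int.emod_def]; ring
  · have hc1 : ((g - 1 : ℕ) : ℤ) = (g:ℤ) - 1 := by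
      push_cast [Nat.cast_sub (by omega : 1 ≤ g)]; ring
    simp only [List.map_cons, List.map_nil, List.sum_cons, List.sum_nil, hcast, hdiv, hc1,
      Nat.cast_zero, add_zero]
    ring
  · exact Int.modEq_iff_dvd.mpr ⟨-1, by ring⟩
  · exact Int.modEq_iff_dvd.mpr ⟨-1, by ring⟩
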